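/- Let G be a simple graph in which every edge lies on a cycle, with connected components H_1, …, H_k where k ≥ 2. For each i ∈ {1,…,k} let e_i = v_i v_i' be an edge of H_i. Let G' be the graph obtained from G by deleting the edges e_1, …, e_k and adding the edges v_1' v_2, v_2' v_3, …, v_{k-1}' v_k, v_k' v_1. Then G' is a simple graph, G' is connected, and every vertex has the same degree in G' as in G. -/

import Mathlib

open scoped Classical

/-- The graph obtained from `G` by deleting the chosen edge `s(v i, v' i)` of each of the
`k` components and adding the chain edges `s(v' i, v (i+1))` (cyclically). -/
def chainedGraph {V : Type*} (G : SimpleGraph V) {k : ℕ} (hk : 0 < k)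
    (v v' : Fin k → V) : SimpleGraph V :=
  (G.deleteEdges {e | ∃ i : Fin k, e = s(v i, v' i)}) ⊔
    SimpleGraph.fromEdgeSet
      {e | ∃ i : Fin k, e = s(v' i, v ⟨((i : ℕ) + 1) % k, Nat.mod_lt _ hk⟩)}

/-- Cyclic successor on `Fin k`. -/
def fsucc {k : ℕ} (hk : 0 < k) (i : Fin k) : Fin k :=
  ⟨((i : ℕ) + 1) % k, Nat.mod_lt _ hk⟩

/-- Cyclic predecessor on `Fin k`. -/
def fpred {k : ℕ} (hk : 0 < k) (i : Fin k) : Fin k :=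
  ⟨((i : ℕ) + (k - 1)) % k, Nat.mod_lt _ hk⟩

lemma fsucc_fpred {k : ℕ} (hk : 0 < k) (i : Fin k) : fsucc hk (fpred hk i) = i := by
  apply Fin.ext
  simp only [fsucc, fpred]
  rw [Nat.mod_add_mod]
  have h1 : (i : ℕ) + (k - 1) + 1 = (i : ℕ) + k := by omega
  rw [h1, Nat.add_mod_right, Nat.mod_eq_of_lt i.2]

lemma fpred_fsucc {k : ℕ} (hk : 0 < k) (i : Fin k) : fpred hk (fsucc hk i) = i := by
  apply Fin.ext
  simp only [fsucc, fpred]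
  rw [Nat.mod_add_mod]
  have h1 : (i : ℕ) + 1 + (k - 1) = (i : ℕ) + k := by omega
  rw [h1, Nat.add_mod_right, Nat.mod_eq_of_lt i.2]

lemma fsucc_ne {k : ℕ} (hk : 0 < k) (hk2 : 2 ≤ k) (i : Fin k) : fsucc hk i ≠ i := by
  intro h
  have hval := congrArg Fin.val h
  simp only [fsucc] at hval
  have hi := i.2
  rcases Nat.lt_or_ge ((i : ℕ) + 1) k with h1 | h1
  · rw [Nat.mod_eq_of_lt h1] at hval; omega
  · have h2 : (i : ℕ) + 1 = k := by omega
    rw [h2, Nat.mod_self] at hval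
    omega

lemma fpred_ne {k : ℕ} (hk : 0 < k) (hk2 : 2 ≤ k) (i : Fin k) : fpred hk i ≠ i := by
  intro h
  have h2 := fsucc_fpred hk i
  rw [h] at h2
  exact fsucc_ne hk hk2 i h2

/-- Let `G` be a simple graph in which every edge lies on a cycle
(i.e. no edge is a bridge), with connected components `H_1, …, H_k`, `k ≥ 2`
(here `v i` is a vertex of `H_i`, the `v i` lie in pairwise distinct components, and every
vertex is in the component of some `v i`).  For each `i` let `e_i = (v i)(v' i)` be an
edge of `H_i`.  Then the graph `G'` obtained from `G` by deleting the edges `e_1, …, e_k`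
and adding the cyclic chain edges `(v' 1)(v 2), …, (v' (k-1))(v k), (v' k)(v 1)` is a
simple graph which is connected, and every vertex has the same degree in `G'` as in `G`. -/
theorem chained_graph_connected_and_regular {V : Type*} [Fintype V]
    (G : SimpleGraph V)
    (hcyc : ∀ e ∈ G.edgeSet, ¬ G.IsBridge e)
    (k : ℕ) (hk : 2 ≤ k)
    (v v' : Fin k → V)
    (hadj : ∀ i, G.Adj (v i) (v' i))
    (hsep : ∀ i j : Fin k, i ≠ j → ¬ G.Reachable (v i) (v j))
    (hcover : ∀ x : V, ∃ i : Fin k, G.Reachable x (v i)) :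
    (chainedGraph G (by omega : 0 < k) v v').Connected ∧
      ∀ x : V, (chainedGraph G (by omega : 0 < k) v v').degree x = G.degree x := by
  classical
  have hk0 : 0 < k := by omega
  set S : Set (Sym2 V) := {e | ∃ i : Fin k, e = s(v i, v' i)} with hS
  -- basic distinctness facts
  have hvinj : ∀ i j : Fin k, v i = v j → i = j := by
    intro i j h
    by_contra hne
    exact hsep i j hne (h ▸ SimpleGraph.Reachable.refl _)
  have hreach_vv' : ∀ i, G.Reachable (v i) (v' i) := fun i => (hadj i).reachable
  have hvv' : ∀ i j : Fin k, v i ≠ v' j := by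
    intro i j h
    by_cases hij : i = j
    · subst hij
      exact G.irrefl (h ▸ hadj i)
    · refine hsep i j hij ?_
      rw [h]
      exact (hreach_vv' j).symm
  have hv'inj : ∀ i j : Fin k, v' i = v' j → i = j := by
    intro i j h
    by_contra hne
    refine hsep i j hne ?_
    exact (hreach_vv' i).trans (h ▸ (hreach_vv' j).symm)
  have hnadj : ∀ i j : Fin k, i ≠ j → ¬ G.Adj (v i) (v' j) := by
    intro i j hij h
    exact hsep i j hij (h.reachable.trans (hreach_vv' j).symm)
  -- adjacency in the chained graph
  have hG'adj : ∀ x y : V, (chainedGraph G hk0 v v').Adj x y ↔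
      (G.Adj x y ∧ ∀ i : Fin k, s(x, y) ≠ s(v i, v' i)) ∨
      ((∃ i : Fin k, s(x, y) = s(v' i, v (fsucc hk0 i))) ∧ x ≠ y) := by
    intro x y
    show ((G.deleteEdges S).Adj x y ∨ _) ↔ _
    rw [SimpleGraph.deleteEdges_adj, SimpleGraph.fromEdgeSet_adj]
    simp only [hS, Set.mem_setOf_eq, not_exists, fsucc]
  -- reachability is preserved by deleting the chosen edges
  have hdelS : ∀ i : Fin k, (G.deleteEdges S).Reachable (v i) (v' i) := by
    intro i
    have hb := hcyc s(v i, v' i) (G.mem_edgeSet.2 (hadj i))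
    rw [SimpleGraph.isBridge_iff] at hb
    push_neg at hb
    obtain ⟨W⟩ := hb
    have hedges : ∀ e ∈ W.edges, e ∈ (G.deleteEdges S).edgeSet := by
      intro e he
      have heG : e ∈ (G \ SimpleGraph.fromEdgeSet {s(v i, v' i)}).edgeSet :=
        W.edges_subset_edgeSet he
      rw [SimpleGraph.edgeSet_sdiff, SimpleGraph.edgeSet_fromEdgeSet] at heG
      rw [SimpleGraph.edgeSet_deleteEdges]
      refine ⟨heG.1, ?_⟩
      rintro ⟨j, rfl⟩
      by_cases hij : j = i
      · subst hij
        exact heG.2 ⟨rfl, by simpa using (hadj j).ne⟩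
      · -- v j is on the walk W, hence reachable from v i, contradiction
        have hsupp : v j ∈ W.support := W.fst_mem_support_of_mem_edges he
        have hreach : (G \ SimpleGraph.fromEdgeSet {s(v i, v' i)}).Reachable (v i) (v j) :=
          (W.takeUntil (v j) hsupp).reachable
        exact hsep i j (fun h => hij h.symm) (hreach.mono sdiff_le)
    exact ⟨W.transfer _ hedges⟩
  have reach_del : ∀ x y : V, G.Reachable x y → (G.deleteEdges S).Reachable x y := by
    intro x y h
    obtain ⟨p⟩ := h
    induction p with
    | nil => exact SimpleGraph.Reachable.refl _
    | @cons a b c hab q ih =>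
      refine SimpleGraph.Reachable.trans ?_ ih
      by_cases hmem : s(a, b) ∈ S
      · obtain ⟨j, hj⟩ := hmem
        rw [Sym2.eq_iff] at hj
        rcases hj with ⟨h1, h2⟩ | ⟨h1, h2⟩
        · rw [h1, h2]; exact hdelS j
        · rw [h1, h2]; exact (hdelS j).symm
      · exact SimpleGraph.Adj.reachable (by rw [SimpleGraph.deleteEdges_adj]; exact ⟨hab, hmem⟩)
  have hle : G.deleteEdges S ≤ chainedGraph G hk0 v v' := le_sup_left
  have hchain : ∀ i : Fin k, (chainedGraph G hk0 v v').Adj (v' i) (v (fsucc hk0 i)) := by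
    intro i
    rw [hG'adj]
    exact Or.inr ⟨⟨i, rfl⟩, Ne.symm (hvv' (fsucc hk0 i) i)⟩
  have key : ∀ n : ℕ, ∀ hn : n < k,
      (chainedGraph G hk0 v v').Reachable (v ⟨0, hk0⟩) (v ⟨n, hn⟩) := by
    intro n
    induction n with
    | zero => intro hn; exact SimpleGraph.Reachable.refl _
    | succ m ih =>
      intro hn
      have hm : m < k := by omega
      have h1 := ih hm
      have h2 : (chainedGraph G hk0 v v').Reachable (v ⟨m, hm⟩) (v' ⟨m, hm⟩) :=
        SimpleGraph.Reachable.mono hle (reach_del _ _ (hreach_vv' _))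
      have h3 : fsucc hk0 ⟨m, hm⟩ = ⟨m + 1, hn⟩ := by
        apply Fin.ext
        simp only [fsucc]
        exact Nat.mod_eq_of_lt hn
      have h4 := (hchain ⟨m, hm⟩).reachable
      rw [h3] at h4
      exact h1.trans (h2.trans h4)
  have hconn : (chainedGraph G hk0 v v').Connected := by
    rw [SimpleGraph.connected_iff]
    refine ⟨?_, ⟨v ⟨0, hk0⟩⟩⟩
    intro x y
    obtain ⟨i, hi⟩ := hcover x
    obtain ⟨j, hj⟩ := hcover y
    have hx := SimpleGraph.Reachable.mono hle (reach_del _ _ hi)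
    have hy := SimpleGraph.Reachable.mono hle (reach_del _ _ hj)
    have hvi : (chainedGraph G hk0 v v').Reachable (v ⟨0, hk0⟩) (v i) := by
      have := key i.1 i.2
      simpa using this
    have hvj : (chainedGraph G hk0 v v').Reachable (v ⟨0, hk0⟩) (v j) := by
      have := key j.1 j.2
      simpa using this
    exact hx.trans (hvi.symm.trans (hvj.trans hy.symm))
  -- degrees
  have degeq : ∀ x : V, (chainedGraph G hk0 v v').degree x = G.degree x := by
    intro x
    by_cases hx1 : ∃ i, x = v i
    · obtain ⟨i, rfl⟩ := hx1
      have hset : (chainedGraph G hk0 v v').neighborFinset (v i) =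
          insert (v' (fpred hk0 i)) ((G.neighborFinset (v i)).erase (v' i)) := by
        ext y
        rw [SimpleGraph.mem_neighborFinset, hG'adj, Finset.mem_insert, Finset.mem_erase,
          SimpleGraph.mem_neighborFinset]
        constructor
        · rintro (⟨hadj', hnS⟩ | ⟨⟨j, hj⟩, hne⟩)
          · refine Or.inr ⟨?_, hadj'⟩
            intro h
            exact hnS i (by rw [h])
          · rw [Sym2.eq_iff] at hj
            rcases hj with ⟨h1, h2⟩ | ⟨h1, h2⟩
            · exact absurd h1 (hvv' i j)
            · have hij : i = fsucc hk0 j := hvinj _ _ h1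
              have hji : j = fpred hk0 i := by
                rw [hij, fpred_fsucc]
              rw [h2, hji]
              exact Or.inl rfl
        · rintro (rfl | ⟨hne, hadj'⟩)
          · refine Or.inr ⟨⟨fpred hk0 i, ?_⟩, hvv' i (fpred hk0 i)⟩
            rw [fsucc_fpred]
            exact Sym2.eq_swap
          · refine Or.inl ⟨hadj', ?_⟩
            intro j hj
            rw [Sym2.eq_iff] at hj
            rcases hj with ⟨h1, h2⟩ | ⟨h1, h2⟩
            · have := hvinj _ _ h1
              subst this
              exact hne h2
            · exact hvv' i j h1
      have hmem : v' i ∈ G.neighborFinset (v i) :=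
        (SimpleGraph.mem_neighborFinset _ _ _).2 (hadj i)
      have hnot : v' (fpred hk0 i) ∉ (G.neighborFinset (v i)).erase (v' i) := by
        intro h
        have h' := Finset.mem_of_mem_erase h
        rw [SimpleGraph.mem_neighborFinset] at h'
        exact hnadj i (fpred hk0 i) (fun hh => (fpred_ne hk0 hk i) hh.symm) h'
      rw [SimpleGraph.degree, SimpleGraph.degree, hset,
        Finset.card_insert_of_notMem hnot, Finset.card_erase_of_mem hmem]
      have hpos : 0 < (G.neighborFinset (v i)).card := Finset.card_pos.2 ⟨_, hmem⟩
      omega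
    · by_cases hx2 : ∃ i, x = v' i
      · obtain ⟨i, rfl⟩ := hx2
        have hset : (chainedGraph G hk0 v v').neighborFinset (v' i) =
            insert (v (fsucc hk0 i)) ((G.neighborFinset (v' i)).erase (v i)) := by
          ext y
          rw [SimpleGraph.mem_neighborFinset, hG'adj, Finset.mem_insert, Finset.mem_erase,
            SimpleGraph.mem_neighborFinset]
          constructor
          · rintro (⟨hadj', hnS⟩ | ⟨⟨j, hj⟩, hne⟩)
            · refine Or.inr ⟨?_, hadj'⟩
              intro h
              refine hnS i ?_
              rw [h]
              exact Sym2.eq_swap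
            · rw [Sym2.eq_iff] at hj
              rcases hj with ⟨h1, h2⟩ | ⟨h1, h2⟩
              · have := hv'inj _ _ h1
                subst this
                exact Or.inl h2
              · exact absurd h1.symm (hvv' (fsucc hk0 j) i)
          · rintro (rfl | ⟨hne, hadj'⟩)
            · exact Or.inr ⟨⟨i, rfl⟩, Ne.symm (hvv' (fsucc hk0 i) i)⟩
            · refine Or.inl ⟨hadj', ?_⟩
              intro j hj
              rw [Sym2.eq_iff] at hj
              rcases hj with ⟨h1, h2⟩ | ⟨h1, h2⟩
              · exact hvv' j i h1.symm
              · have := hv'inj _ _ h1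
                subst this
                exact hne h2
        have hmem : v i ∈ G.neighborFinset (v' i) :=
          (SimpleGraph.mem_neighborFinset _ _ _).2 (hadj i).symm
        have hnot : v (fsucc hk0 i) ∉ (G.neighborFinset (v' i)).erase (v i) := by
          intro h
          have h' := Finset.mem_of_mem_erase h
          rw [SimpleGraph.mem_neighborFinset] at h'
          exact hnadj (fsucc hk0 i) i (fsucc_ne hk0 hk i) h'.symm
        rw [SimpleGraph.degree, SimpleGraph.degree, hset,
          Finset.card_insert_of_notMem hnot, Finset.card_erase_of_mem hmem]
        have hpos : 0 < (G.neighborFinset (v' i)).card := Finset.card_pos.2 ⟨_, hmem⟩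
        omega
      · -- x is none of the selected vertices
        push_neg at hx1 hx2
        have hset : (chainedGraph G hk0 v v').neighborFinset x = G.neighborFinset x := by
          ext y
          rw [SimpleGraph.mem_neighborFinset, hG'adj, SimpleGraph.mem_neighborFinset]
          constructor
          · rintro (⟨hadj', _⟩ | ⟨⟨j, hj⟩, hne⟩)
            · exact hadj'
            · rw [Sym2.eq_iff] at hj
              rcases hj with ⟨h1, _⟩ | ⟨h1, _⟩
              · exact absurd h1 (hx2 j)
              · exact absurd h1 (hx1 (fsucc hk0 j))
          · intro hadj'
            refine Or.inl ⟨hadj', ?_⟩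
            intro j hj
            rw [Sym2.eq_iff] at hj
            rcases hj with ⟨h1, _⟩ | ⟨h1, _⟩
            · exact hx1 j h1
            · exact hx2 j h1
        rw [SimpleGraph.degree, SimpleGraph.degree, hset]
  exact ⟨hconn, degeq⟩
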